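/- Theorem 2.5(iv) (Q-based averagedness of the relaxed G-FBS operator): Assume 2ν > β and let γ be a real number with 0 < γ < 2 − β/(2ν). Let x₁, x₂, y₁, y₂ ∈ H satisfy Q xᵢ − B xᵢ − Q yᵢ ∈ A yᵢ for i = 1, 2 (i.e. yᵢ = T xᵢ), and set zᵢ := xᵢ − γ(xᵢ − yᵢ) (i.e. zᵢ = (I − γ(I − T)) xᵢ). Then ⟪Q (z₁ − z₂), z₁ − z₂⟫ ≤ ⟪Q (x₁ − x₂), x₁ − x₂⟫ − γ² · ((4ν − β − 2γν)/(2γν)) · ⟪Q ((x₁ − y₁) − (x₂ − y₂)), (x₁ − y₁) − (x₂ − y₂)⟫; i.e. I − γ(I − T) is Q-based (2γν/(4ν − β))-averaged. -/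

import Mathlib

lemma stmt6_q2 (ν q c s n : ℝ) (hν : 0 < ν) (hs : 0 ≤ s)
    (hcs : q ^ 2 ≤ c * s) (hvv : ν * c ≤ n) : ν * q ^ 2 ≤ n * s := by
  nlinarith [mul_le_mul_of_nonneg_left hcs hν.le, mul_le_mul_of_nonneg_right hvv hs]

lemma stmt6_bw (ν β q n s : ℝ) (hν : 0 < ν) (hβ : 0 < β) (hn : 0 ≤ n) (hs : 0 ≤ s)
    (hq2 : ν * q ^ 2 ≤ n * s) : 4 * ν * β * q ≤ 4 * ν * n + β ^ 2 * s := by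
  have hA0 : 0 ≤ 4 * ν * n + β ^ 2 * s := by positivity
  have habs : (4 * ν * β * q) ^ 2 ≤ (4 * ν * n + β ^ 2 * s) ^ 2 := by
    nlinarith [sq_nonneg (4 * ν * n - β ^ 2 * s),
      mul_le_mul_of_nonneg_left hq2 (show (0:ℝ) ≤ 16 * ν * β ^ 2 by positivity)]
  rcases le_or_gt (4 * ν * β * q) 0 with h | h
  · linarith
  · by_contra hc
    push_neg at hc
    nlinarith [mul_pos (sub_pos.mpr hc)
      (show (0:ℝ) < 4 * ν * β * q + (4 * ν * n + β ^ 2 * s) by linarith)]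

lemma stmt6_key (ν β n s E bd bw : ℝ) (hν : 0 < ν) (hβ : 0 < β)
    (hn : 0 ≤ n) (hs : 0 ≤ s)
    (hq2 : ν * bw ^ 2 ≤ n * s)
    (hcoco : n ≤ β * bd)
    (hmono : bd - bw ≤ E) :
    (4 * ν - β) * s ≤ 4 * ν * (s + E) := by
  have hbw := stmt6_bw ν β bw n s hν hβ hn hs hq2
  have h1 := mul_le_mul_of_nonneg_left hmono (show (0:ℝ) ≤ 4 * ν * β by positivity)
  have h2 := mul_le_mul_of_nonneg_left hcoco (show (0:ℝ) ≤ 4 * ν by positivity)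
  have key' : β * ((4 * ν - β) * s) ≤ β * (4 * ν * (s + E)) := by nlinarith
  exact le_of_mul_le_mul_left key' hβ

lemma stmt6_final (ν β γ s p X : ℝ) (hν : 0 < ν) (hγ0 : 0 < γ)
    (key : (4 * ν - β) * s ≤ 4 * ν * p) :
    X - 2 * γ * p + γ ^ 2 * s ≤ X - γ ^ 2 * ((4 * ν - β - 2 * γ * ν) / (2 * γ * ν)) * s := by
  have hco : γ ^ 2 * ((4 * ν - β - 2 * γ * ν) / (2 * γ * ν)) =
      γ * (4 * ν - β) / (2 * ν) - γ ^ 2 := by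
    field_simp
  rw [hco]
  have h1 := mul_le_mul_of_nonneg_left key (show (0:ℝ) ≤ γ / (2 * ν) by positivity)
  have e1 : γ / (2 * ν) * ((4 * ν - β) * s) = γ * (4 * ν - β) / (2 * ν) * s := by ring
  have e2 : γ / (2 * ν) * (4 * ν * p) = 2 * γ * p := by field_simp; ring
  linarith [e1 ▸ e2 ▸ h1]

open RealInnerProductSpace

/-- Cauchy–Schwarz for the positive semidefinite form `(v, w) ↦ ⟪Q v, w⟫`. -/
lemma stmt6_cs {H : Type*} [NormedAddCommGroup H] [InnerProductSpace ℝ H]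
    (Q : H →L[ℝ] H)
    (hQsym : ∀ x y : H, ⟪Q x, y⟫ = ⟪x, Q y⟫)
    (hQpos : ∀ x : H, 0 ≤ ⟪Q x, x⟫)
    (v w : H) : ⟪Q v, w⟫ ^ 2 ≤ ⟪Q v, v⟫ * ⟪Q w, w⟫ := by
  have hsymm : ⟪Q w, v⟫ = ⟪Q v, w⟫ := by rw [hQsym, real_inner_comm]
  have h : ∀ t : ℝ, 0 ≤ ⟪Q w, w⟫ * (t * t) + (2 * ⟪Q v, w⟫) * t + ⟪Q v, v⟫ := by
    intro t
    have h0 := hQpos (t • w + v)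
    have hexp : ⟪Q (t • w + v), t • w + v⟫ =
        ⟪Q w, w⟫ * (t * t) + (2 * ⟪Q v, w⟫) * t + ⟪Q v, v⟫ := by
      simp only [map_add, map_smul, inner_add_left, inner_add_right,
        real_inner_smul_left, real_inner_smul_right]
      linear_combination t * hsymm
    rw [hexp] at h0
    linarith
  have hd := discrim_le_zero h
  rw [discrim] at hd
  nlinarith [hd]

set_option maxHeartbeats 1600000 in
/-- Theorem 2.5(iv): `I − γ(I − T)` is `Q`-based `(2γν/(4ν − β))`-averaged. -/
theorem stmt_6
    {H : Type*} [NormedAddCommGroup H] [InnerProductSpace ℝ H] [CompleteSpace H]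
    (Q : H →L[ℝ] H)
    (hQsym : ∀ x y : H, ⟪Q x, y⟫ = ⟪x, Q y⟫)
    (hQpos : ∀ x : H, 0 ≤ ⟪Q x, x⟫)
    (ν : ℝ) (hν : 0 < ν)
    (hνQ : ∀ w ∈ (LinearMap.ker (Q : H →ₗ[ℝ] H))ᗮ, ν * ‖w‖ ≤ ‖Q w‖)
    (β : ℝ) (hβ : 0 ≤ β)
    (hνβ : β < 2 * ν)
    (γ : ℝ) (hγ0 : 0 < γ) (hγ1 : γ < 2 - β / (2 * ν))
    (B : H → H)
    (hB : ∀ x y : H, ‖B x - B y‖ ^ 2 ≤ β * ⟪B x - B y, x - y⟫)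
    (hranB : Set.range B ⊆ Set.range Q)
    (A : H → Set H)
    (hA : ∀ x y u v : H, u ∈ A x → v ∈ A y → 0 ≤ ⟪u - v, x - y⟫)
    (x₁ x₂ y₁ y₂ : H)
    (hy₁ : Q x₁ - B x₁ - Q y₁ ∈ A y₁)
    (hy₂ : Q x₂ - B x₂ - Q y₂ ∈ A y₂)
    (z₁ z₂ : H) (hz₁ : z₁ = x₁ - γ • (x₁ - y₁)) (hz₂ : z₂ = x₂ - γ • (x₂ - y₂)) :
    ⟪Q (z₁ - z₂), z₁ - z₂⟫ ≤ ⟪Q (x₁ - x₂), x₁ - x₂⟫ -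
      γ ^ 2 * ((4 * ν - β - 2 * γ * ν) / (2 * γ * ν)) *
        ⟪Q ((x₁ - y₁) - (x₂ - y₂)), (x₁ - y₁) - (x₂ - y₂)⟫ := by
  set d := x₁ - x₂ with hd
  set w := (x₁ - y₁) - (x₂ - y₂) with hw
  set e := y₁ - y₂ with he
  set b := B x₁ - B x₂ with hb
  have hwde : w = d - e := by rw [hw, hd, he]; abel
  have hs0 : 0 ≤ ⟪Q w, w⟫ := hQpos w
  -- monotonicity of A
  have hmono : ⟪b, e⟫ ≤ ⟪Q w, e⟫ := by
    have h0 := hA y₁ y₂ _ _ hy₁ hy₂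
    have heq : (Q x₁ - B x₁ - Q y₁) - (Q x₂ - B x₂ - Q y₂) = Q w - b := by
      rw [hwde, hd, he, hb]
      simp only [map_sub]
      abel
    rw [heq, inner_sub_left, ← he] at h0
    linarith
  have hpe : ⟪Q w, d⟫ = ⟪Q w, w⟫ + ⟪Q w, e⟫ := by
    have : d = w + e := by rw [hwde]; abel
    rw [this, inner_add_right]
  -- cocoercivity
  have hcoco : ‖b‖ ^ 2 ≤ β * ⟪b, d⟫ := hB x₁ x₂
  have hbe : ⟪b, e⟫ = ⟪b, d⟫ - ⟪b, w⟫ := by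
    have : e = d - w := by rw [hwde]; abel
    rw [this, inner_sub_right]
  -- b lies in the range of Q; extract v ∈ (ker Q)ᗮ with Q v = b
  obtain ⟨a₁, ha₁⟩ := hranB (Set.mem_range_self x₁)
  obtain ⟨a₂, ha₂⟩ := hranB (Set.mem_range_self x₂)
  have hclosed : IsClosed (LinearMap.ker (Q : H →ₗ[ℝ] H) : Set H) :=
    ContinuousLinearMap.isClosed_ker Q
  haveI : CompleteSpace (LinearMap.ker (Q : H →ₗ[ℝ] H)) := hclosed.completeSpace_coe
  set a : H := a₁ - a₂ with ha
  set v : H := a - (Submodule.orthogonalProjection (LinearMap.ker (Q : H →ₗ[ℝ] H)) a : H) with hv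
  have hvmem : v ∈ (LinearMap.ker (Q : H →ₗ[ℝ] H))ᗮ :=
    Submodule.sub_starProjection_mem_orthogonal a
  have hQv : Q v = b := by
    have hk : Q ((Submodule.orthogonalProjection (LinearMap.ker (Q : H →ₗ[ℝ] H)) a : H)) = 0 :=
      (Submodule.orthogonalProjection (LinearMap.ker (Q : H →ₗ[ℝ] H)) a).2
    rw [hv, map_sub, hk, sub_zero, ha, map_sub, ha₁, ha₂, hb]
  -- bound ν⟪Q v, v⟫ by ‖b‖²
  have hvv : ν * ⟪Q v, v⟫ ≤ ‖b‖ ^ 2 := by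
    have h1 : ⟪Q v, v⟫ ≤ ‖Q v‖ * ‖v‖ := real_inner_le_norm _ _
    have h2 : ν * ‖v‖ ≤ ‖Q v‖ := hνQ v hvmem
    have h3 : 0 ≤ ‖Q v‖ := norm_nonneg _
    calc ν * ⟪Q v, v⟫ ≤ ν * (‖Q v‖ * ‖v‖) := mul_le_mul_of_nonneg_left h1 hν.le
      _ = ‖Q v‖ * (ν * ‖v‖) := by ring
      _ ≤ ‖Q v‖ * ‖Q v‖ := mul_le_mul_of_nonneg_left h2 h3
      _ = ‖b‖ ^ 2 := by rw [hQv]; ring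
  have hbwq : ⟪b, w⟫ = ⟪Q v, w⟫ := by rw [hQv]
  have hcs : ⟪b, w⟫ ^ 2 ≤ ⟪Q v, v⟫ * ⟪Q w, w⟫ := by
    rw [hbwq]; exact stmt6_cs Q hQsym hQpos v w
  have hq2 : ν * ⟪b, w⟫ ^ 2 ≤ ‖b‖ ^ 2 * ⟪Q w, w⟫ :=
    stmt6_q2 ν ⟪b, w⟫ ⟪Q v, v⟫ ⟪Q w, w⟫ (‖b‖ ^ 2) hν hs0 hcs hvv
  -- Key inequality
  have key : (4 * ν - β) * ⟪Q w, w⟫ ≤ 4 * ν * ⟪Q w, d⟫ := by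
    rw [hpe]
    rcases eq_or_lt_of_le hβ with hβ0 | hβpos
    · -- β = 0 : b = 0
      have hb00 : ‖b‖ ^ 2 ≤ 0 := by rw [← hβ0] at hcoco; simpa using hcoco
      have hb0 : b = 0 := norm_eq_zero.mp (by nlinarith [norm_nonneg b])
      have hE0 : (0:ℝ) ≤ ⟪Q w, e⟫ := by rw [hb0] at hmono; simpa using hmono
      rw [← hβ0]
      nlinarith [mul_nonneg hν.le hE0]
    · exact stmt6_key ν β (‖b‖ ^ 2) ⟪Q w, w⟫ ⟪Q w, e⟫ ⟪b, d⟫ ⟪b, w⟫ hν hβpos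
        (sq_nonneg _) hs0 hq2 hcoco (by linarith)
  -- expand the relaxed operator
  have hzz : z₁ - z₂ = d - γ • w := by
    rw [hz₁, hz₂, hd, hw]
    module
  have hsymm : ⟪Q d, w⟫ = ⟪Q w, d⟫ := by rw [hQsym, real_inner_comm]
  have hexp : ⟪Q (z₁ - z₂), z₁ - z₂⟫ =
      ⟪Q d, d⟫ - 2 * γ * ⟪Q w, d⟫ + γ ^ 2 * ⟪Q w, w⟫ := by
    rw [hzz]
    simp only [map_sub, map_smul, inner_sub_left, inner_sub_right,
      real_inner_smul_left, real_inner_smul_right]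
    linear_combination (-γ) * hsymm
  rw [hexp]
  exact stmt6_final ν β γ ⟪Q w, w⟫ ⟪Q w, d⟫ ⟪Q d, d⟫ hν hγ0 key
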